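/- The Narrow Randomized Mechanism (NRM) is strategyproof in expectation: no agent can strictly decrease her expected distance to the facility by misreporting her location. -/

import Mathlib

open Finset

variable {n m : ℕ}

/-- Members of group `j`. -/
def grp (g : Fin n → Fin m) (j : Fin m) : Finset (Fin n) :=
  Finset.univ.filter (fun i => g i = j)

/-- Maximum total group cost. -/
noncomputable def mtgc (x : Fin n → ℝ) (g : Fin n → Fin m) (y : ℝ) : ℝ :=
  ⨆ j : Fin m, ∑ i ∈ grp g j, |y - x i|

/-- Maximum average group cost. -/
noncomputable def magc (x : Fin n → ℝ) (g : Fin n → Fin m) (y : ℝ) : ℝ :=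
  ⨆ j : Fin m, (∑ i ∈ grp g j, |y - x i|) / (grp g j).card

/-- Left median of a multiset of reals (`⌈k/2⌉`-th smallest). -/
noncomputable def medianOf (s : Multiset ℝ) : ℝ :=
  (s.sort (· ≤ ·)).getD ((Multiset.card s - 1) / 2) 0

/-- Left median of the locations of the members of group `j`. -/
noncomputable def groupMedian (x : Fin n → ℝ) (g : Fin n → Fin m) (j : Fin m) : ℝ :=
  medianOf ((grp g j).val.map x)

/-- A largest group, ties broken by the smallest index. -/
noncomputable def majGroup (g : Fin n → Fin m) [NeZero m] : Fin m :=
  (Finset.univ.filter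
    (fun j => ∀ k : Fin m, (grp g k).card ≤ (grp g j).card)).min' (by
      obtain ⟨b, -, hb⟩ :=
        Finset.exists_max_image Finset.univ (fun j => (grp g j).card) Finset.univ_nonempty
      exact ⟨b, Finset.mem_filter.mpr ⟨Finset.mem_univ _, fun k => hb k (Finset.mem_univ k)⟩⟩)

/-- Majority Group Deterministic Mechanism. -/
noncomputable def MGDM (x : Fin n → ℝ) (g : Fin n → Fin m) [NeZero m] : ℝ :=
  groupMedian x g (majGroup g)

noncomputable def avgc (x : Fin n → ℝ) (g : Fin n → Fin m) (j : Fin m) (y : ℝ) : ℝ :=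
  (∑ i ∈ grp g j, |y - x i|) / (grp g j).card

noncomputable def maxc (x : Fin n → ℝ) (g : Fin n → Fin m) (j : Fin m) (y : ℝ) : ℝ :=
  sSup ((fun i => |y - x i|) '' {i | g i = j})

noncomputable def minc (x : Fin n → ℝ) (g : Fin n → Fin m) (j : Fin m) (y : ℝ) : ℝ :=
  sInf ((fun i => |y - x i|) '' {i | g i = j})

noncomputable def IIF1 (x : Fin n → ℝ) (g : Fin n → Fin m) (y : ℝ) : ℝ :=
  (⨆ j : Fin m, avgc x g j y) + ⨆ j : Fin m, (maxc x g j y - minc x g j y)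
/-- Leftmost group median. -/
noncomputable def xml [NeZero m] (x : Fin n → ℝ) (g : Fin n → Fin m) : ℝ :=
  Finset.univ.inf' Finset.univ_nonempty (groupMedian x g)

/-- Rightmost group median. -/
noncomputable def xmr [NeZero m] (x : Fin n → ℝ) (g : Fin n → Fin m) : ℝ :=
  Finset.univ.sup' Finset.univ_nonempty (groupMedian x g)

/-- Expected distance from point `z` to the facility under NRM, which places
the facility at `x_ml` w.p. 1/4, at `x_mr` w.p. 1/4, and at their midpoint
w.p. 1/2. -/
noncomputable def NRMcost [NeZero m] (x : Fin n → ℝ) (g : Fin n → Fin m) (z : ℝ) : ℝ :=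
  1/4 * |xml x g - z| + 1/4 * |xmr x g - z| + 1/2 * |(xml x g + xmr x g) / 2 - z|

namespace NRMaux

open List

lemma sorted_getD_mono {L : List ℝ} (hL : L.Pairwise (· ≤ ·)) {i j : ℕ} (hij : i ≤ j)
    (hj : j < L.length) : L.getD i 0 ≤ L.getD j 0 := by
  rw [List.getD_eq_getElem L 0 (lt_of_le_of_lt hij hj), List.getD_eq_getElem L 0 hj]
  exact hL.rel_get_of_le (a := ⟨i, lt_of_le_of_lt hij hj⟩) (b := ⟨j, hj⟩) hij

/-- insertion position -/
noncomputable def ip (a : ℝ) (L : List ℝ) : ℕ :=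
  (L.takeWhile (fun b => decide ¬a ≤ b)).length

lemma ip_le (a : ℝ) (L : List ℝ) : ip a L ≤ L.length :=
  (L.takeWhile_prefix _).length_le

lemma lt_of_lt_ip {a : ℝ} {L : List ℝ} {j : ℕ} (h : j < ip a L) (hj : j < L.length) :
    L.getD j 0 < a := by
  set t := L.takeWhile (fun b => decide ¬a ≤ b) with htdef
  set d := L.dropWhile (fun b => decide ¬a ≤ b) with hddef
  have hip : ip a L = t.length := rfl
  have hsplit : t ++ d = L := List.takeWhile_append_dropWhile ..
  have hjt : j < t.length := by omega
  rw [← hsplit, List.getD_append _ _ _ _ hjt, List.getD_eq_getElem t 0 hjt]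
  have hmem : t[j]'hjt ∈ L.takeWhile (fun b => decide ¬a ≤ b) := List.getElem_mem hjt
  have h2 : ¬ a ≤ t[j]'hjt := by simpa using List.mem_takeWhile_imp hmem
  exact not_le.mp h2

lemma le_of_ip_le {a : ℝ} {L : List ℝ} (hL : L.Pairwise (· ≤ ·)) {j : ℕ}
    (h : ip a L ≤ j) (hj : j < L.length) : a ≤ L.getD j 0 := by
  set t := L.takeWhile (fun b => decide ¬a ≤ b) with htdef
  set d := L.dropWhile (fun b => decide ¬a ≤ b) with hddef
  have hip : ip a L = t.length := rfl
  have hsplit : t ++ d = L := List.takeWhile_append_dropWhile ..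
  have hlen : t.length + d.length = L.length := by rw [← List.length_append, hsplit]
  have hdpos : 0 < d.length := by omega
  have hd0 : a ≤ d.getD 0 0 := by
    have := List.dropWhile_get_zero_not (fun b => decide ¬a ≤ b) L hdpos
    simp only [Bool.not_eq_true, decide_not, Bool.not_eq_false', decide_eq_true_eq] at this
    rwa [List.getD_eq_getElem d 0 hdpos]
  have hdsorted : d.Pairwise (· ≤ ·) := hL.sublist (List.dropWhile_sublist _)
  have hjd : j - t.length < d.length := by omega
  calc a ≤ d.getD 0 0 := hd0
    _ ≤ d.getD (j - t.length) 0 := sorted_getD_mono hdsorted (Nat.zero_le _) hjd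
    _ = L.getD j 0 := by rw [← hsplit, List.getD_append_right _ _ _ _ (by omega)]

lemma ins_getD_lt {a : ℝ} {L : List ℝ} {k : ℕ} (h : k < ip a L) :
    (L.orderedInsert (· ≤ ·) a).getD k 0 = L.getD k 0 := by
  rw [List.orderedInsert_eq_take_drop]
  set t := L.takeWhile (fun b => decide ¬a ≤ b) with htdef
  set d := L.dropWhile (fun b => decide ¬a ≤ b) with hddef
  have hip : ip a L = t.length := rfl
  have hsplit : t ++ d = L := List.takeWhile_append_dropWhile ..
  rw [List.getD_append _ _ _ _ (by omega), ← hsplit, List.getD_append _ _ _ _ (by omega)]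

lemma ins_getD_ip {a : ℝ} (L : List ℝ) :
    (L.orderedInsert (· ≤ ·) a).getD (ip a L) 0 = a := by
  rw [List.orderedInsert_eq_take_drop]
  set t := L.takeWhile (fun b => decide ¬a ≤ b) with htdef
  have hip : ip a L = t.length := rfl
  rw [List.getD_append_right _ _ _ _ (by omega), hip, Nat.sub_self, List.getD_cons_zero]

lemma ins_getD_gt {a : ℝ} {L : List ℝ} {k : ℕ} (h : ip a L < k) (hk : k ≤ L.length) :
    (L.orderedInsert (· ≤ ·) a).getD k 0 = L.getD (k - 1) 0 := by
  rw [List.orderedInsert_eq_take_drop]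
  set t := L.takeWhile (fun b => decide ¬a ≤ b) with htdef
  set d := L.dropWhile (fun b => decide ¬a ≤ b) with hddef
  have hip : ip a L = t.length := rfl
  have hsplit : t ++ d = L := List.takeWhile_append_dropWhile ..
  rw [List.getD_append_right _ _ _ _ (by omega),
    show k - t.length = (k - t.length - 1) + 1 by omega, List.getD_cons_succ,
    ← hsplit, List.getD_append_right _ _ _ _ (by omega)]
  congr 1
  omega



lemma sort_cons_eq (a : ℝ) (s : Multiset ℝ) :
    (a ::ₘ s).sort (· ≤ ·) = (s.sort (· ≤ ·)).orderedInsert (· ≤ ·) a := by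
  have hp : ((a ::ₘ s).sort (· ≤ ·)).Perm ((s.sort (· ≤ ·)).orderedInsert (· ≤ ·) a) := by
    refine Multiset.coe_eq_coe.mp ?_
    rw [Multiset.sort_eq]
    have h1 : (↑((s.sort (· ≤ ·)).orderedInsert (· ≤ ·) a) : Multiset ℝ) =
        ↑(a :: s.sort (· ≤ ·)) :=
      Multiset.coe_eq_coe.mpr (List.perm_orderedInsert _ _ _)
    rw [h1, ← Multiset.cons_coe, Multiset.sort_eq]
  exact List.Perm.eq_of_pairwise' (Multiset.pairwise_sort _ _)
    (List.Pairwise.orderedInsert a _ (Multiset.pairwise_sort _ _)) hp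

lemma medianOf_lt_move (T : Multiset ℝ) (z x' : ℝ) (h : medianOf (z ::ₘ T) < z) :
    medianOf (x' ::ₘ T) ≤ medianOf (z ::ₘ T) := by
  set L := T.sort (· ≤ ·) with hLdef
  have hLs : L.Pairwise (· ≤ ·) := Multiset.pairwise_sort _ _
  have hN : L.length = Multiset.card T := Multiset.length_sort _
  set k := Multiset.card T / 2 with hkdef
  have hkN : k ≤ L.length := by omega
  have hm0 : medianOf (z ::ₘ T) = (L.orderedInsert (· ≤ ·) z).getD k 0 := by
    rw [medianOf, sort_cons_eq, Multiset.card_cons]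
    rfl
  have hm1 : medianOf (x' ::ₘ T) = (L.orderedInsert (· ≤ ·) x').getD k 0 := by
    rw [medianOf, sort_cons_eq, Multiset.card_cons]
    rfl
  have hkip : k < ip z L := by
    by_contra hc
    push_neg at hc
    rcases eq_or_lt_of_le hc with he | hlt
    · rw [hm0, ← he, ins_getD_ip] at h
      exact lt_irrefl _ h
    · rw [hm0, ins_getD_gt hlt hkN] at h
      have := le_of_ip_le hLs (a := z) (j := k - 1) (by omega) (by omega)
      linarith
  have hkN' : k < L.length := lt_of_lt_of_le hkip (ip_le _ _)
  rw [hm0, ins_getD_lt hkip, hm1]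
  rcases lt_trichotomy k (ip x' L) with hc | hc | hc
  · rw [ins_getD_lt hc]
  · rw [hc, ins_getD_ip]
    exact le_of_ip_le hLs le_rfl (hc ▸ hkN')
  · rw [ins_getD_gt hc hkN]
    exact sorted_getD_mono hLs (by omega) hkN'

lemma medianOf_gt_move (T : Multiset ℝ) (z x' : ℝ) (h : z < medianOf (z ::ₘ T)) :
    medianOf (z ::ₘ T) ≤ medianOf (x' ::ₘ T) := by
  set L := T.sort (· ≤ ·) with hLdef
  have hLs : L.Pairwise (· ≤ ·) := Multiset.pairwise_sort _ _
  have hN : L.length = Multiset.card T := Multiset.length_sort _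
  set k := Multiset.card T / 2 with hkdef
  have hkN : k ≤ L.length := by omega
  have hm0 : medianOf (z ::ₘ T) = (L.orderedInsert (· ≤ ·) z).getD k 0 := by
    rw [medianOf, sort_cons_eq, Multiset.card_cons]
    rfl
  have hm1 : medianOf (x' ::ₘ T) = (L.orderedInsert (· ≤ ·) x').getD k 0 := by
    rw [medianOf, sort_cons_eq, Multiset.card_cons]
    rfl
  have hkip : ip z L < k := by
    by_contra hc
    push_neg at hc
    rcases eq_or_lt_of_le hc with he | hlt
    · rw [hm0, he, ins_getD_ip] at h
      exact lt_irrefl _ h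
    · rw [hm0, ins_getD_lt hlt] at h
      have := lt_of_lt_ip (a := z) hlt (lt_of_lt_of_le hlt (ip_le _ _))
      linarith
  rw [hm0, ins_getD_gt hkip hkN, hm1]
  rcases lt_trichotomy k (ip x' L) with hc | hc | hc
  · have hkN' : k < L.length := lt_of_lt_of_le hc (ip_le _ _)
    rw [ins_getD_lt hc]
    exact sorted_getD_mono hLs (by omega) hkN'
  · rw [hc, ins_getD_ip]
    exact le_of_lt (lt_of_lt_ip (by omega) (by omega))
  · rw [ins_getD_gt hc hkN]

lemma median_disj (T : Multiset ℝ) (z x' : ℝ) :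
    (z ≤ medianOf (z ::ₘ T) ∧ medianOf (z ::ₘ T) ≤ medianOf (x' ::ₘ T)) ∨
    (medianOf (x' ::ₘ T) ≤ medianOf (z ::ₘ T) ∧ medianOf (z ::ₘ T) ≤ z) := by
  rcases lt_trichotomy z (medianOf (z ::ₘ T)) with h | h | h
  · exact Or.inl ⟨le_of_lt h, medianOf_gt_move T z x' h⟩
  · rcases le_total (medianOf (x' ::ₘ T)) (medianOf (z ::ₘ T)) with h2 | h2
    · exact Or.inr ⟨h2, le_of_eq h.symm⟩
    · exact Or.inl ⟨le_of_eq h, h2⟩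
  · exact Or.inr ⟨medianOf_lt_move T z x' h, le_of_lt h⟩


lemma key (z p q m0 m1 : ℝ) (hpq : p ≤ q) (h1 : z ≤ m0) (h2 : m0 ≤ m1) :
    1/4 * |min m0 p - z| + 1/4 * |max m0 q - z| + 1/2 * |(min m0 p + max m0 q)/2 - z| ≤
    1/4 * |min m1 p - z| + 1/4 * |max m1 q - z| + 1/2 * |(min m1 p + max m1 q)/2 - z| := by
  rcases le_total p m0 with hp | hp
  · rw [min_eq_right hp, min_eq_right (hp.trans h2)]
    have hzB : z ≤ max m0 q := le_trans h1 (le_max_left _ _)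
    have hBB' : max m0 q ≤ max m1 q := max_le_max h2 le_rfl
    rw [abs_of_nonneg (by linarith : (0:ℝ) ≤ max m0 q - z),
      abs_of_nonneg (by linarith : (0:ℝ) ≤ max m1 q - z)]
    rcases abs_cases ((p + max m0 q)/2 - z) with ⟨e1, f1⟩ | ⟨e1, f1⟩ <;>
      rcases abs_cases ((p + max m1 q)/2 - z) with ⟨e2, f2⟩ | ⟨e2, f2⟩ <;>
      rw [e1, e2] <;> linarith
  · have hA : min m0 p = m0 := min_eq_left hp
    have hq : max m0 q = q := max_eq_right (hp.trans hpq)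
    have hA' : m0 ≤ min m1 p := le_min h2 hp
    have hB' : q ≤ max m1 q := le_max_right _ _
    have hzq : z ≤ q := h1.trans (hp.trans hpq)
    rw [hA, hq,
      abs_of_nonneg (by linarith : (0:ℝ) ≤ m0 - z),
      abs_of_nonneg (by linarith : (0:ℝ) ≤ q - z),
      abs_of_nonneg (by linarith : (0:ℝ) ≤ (m0 + q)/2 - z),
      abs_of_nonneg (by linarith : (0:ℝ) ≤ min m1 p - z),
      abs_of_nonneg (by linarith : (0:ℝ) ≤ max m1 q - z),
      abs_of_nonneg (by linarith : (0:ℝ) ≤ (min m1 p + max m1 q)/2 - z)]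
    linarith

lemma key' (z p q m0 m1 : ℝ) (hpq : p ≤ q) (h1 : m0 ≤ z) (h2 : m1 ≤ m0) :
    1/4 * |min m0 p - z| + 1/4 * |max m0 q - z| + 1/2 * |(min m0 p + max m0 q)/2 - z| ≤
    1/4 * |min m1 p - z| + 1/4 * |max m1 q - z| + 1/2 * |(min m1 p + max m1 q)/2 - z| := by
  rcases le_total m0 q with hq | hq
  · rw [max_eq_right hq, max_eq_right (h2.trans hq)]
    have hAz : min m0 p ≤ z := le_trans (min_le_left _ _) h1
    have hA'A : min m1 p ≤ min m0 p := min_le_min h2 le_rfl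
    rw [abs_of_nonpos (by linarith : min m0 p - z ≤ 0),
      abs_of_nonpos (by linarith : min m1 p - z ≤ 0)]
    rcases abs_cases ((min m0 p + q)/2 - z) with ⟨e1, f1⟩ | ⟨e1, f1⟩ <;>
      rcases abs_cases ((min m1 p + q)/2 - z) with ⟨e2, f2⟩ | ⟨e2, f2⟩ <;>
      rw [e1, e2] <;> linarith
  · have hp' : p ≤ m0 := hpq.trans hq
    have hA : min m0 p = p := min_eq_right hp'
    have hB : max m0 q = m0 := max_eq_left hq
    have hB' : max m1 q ≤ m0 := max_le h2 hq
    have hA' : min m1 p ≤ p := min_le_right _ _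
    have hpz : p ≤ z := hp'.trans h1
    rw [hA, hB,
      abs_of_nonpos (by linarith : p - z ≤ 0),
      abs_of_nonpos (by linarith : m0 - z ≤ 0),
      abs_of_nonpos (by linarith : (p + m0)/2 - z ≤ 0),
      abs_of_nonpos (by linarith : min m1 p - z ≤ 0),
      abs_of_nonpos (by linarith : max m1 q - z ≤ 0),
      abs_of_nonpos (by linarith : (min m1 p + max m1 q)/2 - z ≤ 0)]
    linarith

lemma abs_le_of_between {z m0 m1 : ℝ} (hd : (z ≤ m0 ∧ m0 ≤ m1) ∨ (m1 ≤ m0 ∧ m0 ≤ z)) :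
    |m0 - z| ≤ |m1 - z| := by
  rcases hd with ⟨h1, h2⟩ | ⟨h1, h2⟩
  · rw [abs_of_nonneg (by linarith), abs_of_nonneg (by linarith)]
    linarith
  · rw [abs_of_nonpos (by linarith), abs_of_nonpos (by linarith)]
    linarith

lemma inf'_univ_eq_min {m : ℕ} [NeZero m] (f : Fin m → ℝ) {j0 : Fin m}
    (hne : (Finset.univ.erase j0).Nonempty) :
    Finset.univ.inf' Finset.univ_nonempty f = min (f j0) ((Finset.univ.erase j0).inf' hne f) := by
  apply _root_.le_antisymm
  · apply le_min
    · exact Finset.inf'_le _ (Finset.mem_univ _)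
    · exact Finset.le_inf' hne _ (fun b _ => Finset.inf'_le _ (Finset.mem_univ _))
  · apply Finset.le_inf'
    intro j _
    by_cases hj : j = j0
    · subst hj; exact min_le_left _ _
    · exact le_trans (min_le_right _ _)
        (Finset.inf'_le _ (Finset.mem_erase.mpr ⟨hj, Finset.mem_univ _⟩))

lemma sup'_univ_eq_max {m : ℕ} [NeZero m] (f : Fin m → ℝ) {j0 : Fin m}
    (hne : (Finset.univ.erase j0).Nonempty) :
    Finset.univ.sup' Finset.univ_nonempty f = max (f j0) ((Finset.univ.erase j0).sup' hne f) := by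
  apply _root_.le_antisymm
  · apply Finset.sup'_le
    intro j _
    by_cases hj : j = j0
    · subst hj; exact le_max_left _ _
    · exact le_trans (Finset.le_sup' _ (Finset.mem_erase.mpr ⟨hj, Finset.mem_univ _⟩))
        (le_max_right _ _)
  · apply max_le
    · exact Finset.le_sup' _ (Finset.mem_univ _)
    · exact Finset.sup'_le hne _ (fun b _ => Finset.le_sup' _ (Finset.mem_univ _))

end NRMaux

/-- The Narrow Randomized Mechanism is strategyproof in expectation: no agent
can strictly decrease her expected distance to the facility by misreporting. -/
theorem stmt11 [NeZero m] (x : Fin n → ℝ) (g : Fin n → Fin m)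
    (hg : Function.Surjective g) (i : Fin n) (x' : ℝ) :
    NRMcost x g (x i) ≤ NRMcost (Function.update x i x') g (x i) := by
  classical
  set z := x i with hz
  set x'' := Function.update x i x' with hx''
  set j0 := g i with hj0
  have hmem : i ∈ (grp g j0).val := by simp [grp, hj0]
  set T : Multiset ℝ := ((grp g j0).val.erase i).map x with hT
  have hM0 : (grp g j0).val.map x = z ::ₘ T := by
    conv_lhs => rw [← Multiset.cons_erase hmem]
    rw [Multiset.map_cons]
  have hne_of_mem_erase : ∀ a, a ∈ (grp g j0).val.erase i → a ≠ i := by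
    intro a ha
    rw [← Finset.erase_val] at ha
    exact (Finset.mem_erase.mp (Finset.mem_val.mp ha)).1
  have herase_map : ((grp g j0).val.erase i).map x'' = T := by
    rw [hT]
    apply Multiset.map_congr rfl
    intro a ha
    rw [hx'']
    exact Function.update_of_ne (hne_of_mem_erase a ha) _ _
  have hM1 : (grp g j0).val.map x'' = x' ::ₘ T := by
    conv_lhs => rw [← Multiset.cons_erase hmem]
    rw [Multiset.map_cons, herase_map, hx'', Function.update_self]
  have hmedians : ∀ j : Fin m, j ≠ j0 → groupMedian x'' g j = groupMedian x g j := by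
    intro j hj
    have hmap : ((grp g j).val.map x'') = ((grp g j).val.map x) := by
      apply Multiset.map_congr rfl
      intro a ha
      have hgj : g a = j := by
        have := Finset.mem_filter.mp (Finset.mem_val.mp ha)
        simpa [grp] using this.2
      have hai : a ≠ i := by
        intro hcon
        exact hj (by rw [← hgj, hcon, ← hj0])
      rw [hx'']
      exact Function.update_of_ne hai _ _
    rw [groupMedian, groupMedian, hmap]
  have hm0 : groupMedian x g j0 = medianOf (z ::ₘ T) := by rw [groupMedian, hM0]
  have hm1 : groupMedian x'' g j0 = medianOf (x' ::ₘ T) := by rw [groupMedian, hM1]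
  have hd := NRMaux.median_disj T z x'
  rcases Finset.eq_empty_or_nonempty (Finset.univ.erase j0) with he | hne
  · have hall : ∀ j : Fin m, j = j0 := by
      intro j
      by_contra hj
      have : j ∈ Finset.univ.erase j0 := Finset.mem_erase.mpr ⟨hj, Finset.mem_univ j⟩
      rw [he] at this
      exact absurd this (Finset.notMem_empty j)
    have hxml : ∀ y : Fin n → ℝ, xml y g = groupMedian y g j0 := by
      intro y
      refine _root_.le_antisymm (Finset.inf'_le _ (Finset.mem_univ _)) ?_
      exact Finset.le_inf' _ _ (fun j _ => by rw [hall j])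
    have hxmr : ∀ y : Fin n → ℝ, xmr y g = groupMedian y g j0 := by
      intro y
      refine _root_.le_antisymm ?_ (Finset.le_sup' _ (Finset.mem_univ _))
      exact Finset.sup'_le _ _ (fun j _ => by rw [hall j])
    have habs : |groupMedian x g j0 - z| ≤ |groupMedian x'' g j0 - z| := by
      rw [hm0, hm1]
      exact NRMaux.abs_le_of_between hd
    have hmid : ∀ u : ℝ, (u + u) / 2 = u := fun u => by ring
    rw [NRMcost, NRMcost, hxml x, hxmr x, hxml x'', hxmr x'', hmid, hmid]
    linarith
  · set p := (Finset.univ.erase j0).inf' hne (groupMedian x g) with hp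
    set q := (Finset.univ.erase j0).sup' hne (groupMedian x g) with hq
    have hpq : p ≤ q := by
      obtain ⟨j, hj⟩ := hne
      exact le_trans (Finset.inf'_le _ hj) (Finset.le_sup' _ hj)
    have hp'' : (Finset.univ.erase j0).inf' hne (groupMedian x'' g) = p :=
      Finset.inf'_congr hne rfl (fun j hj => hmedians j (Finset.mem_erase.mp hj).1)
    have hq'' : (Finset.univ.erase j0).sup' hne (groupMedian x'' g) = q :=
      Finset.sup'_congr hne rfl (fun j hj => hmedians j (Finset.mem_erase.mp hj).1)
    have hxml : xml x g = min (groupMedian x g j0) p := NRMaux.inf'_univ_eq_min _ hne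
    have hxmr : xmr x g = max (groupMedian x g j0) q := NRMaux.sup'_univ_eq_max _ hne
    have hxml'' : xml x'' g = min (groupMedian x'' g j0) p := by
      rw [xml, NRMaux.inf'_univ_eq_min (groupMedian x'' g) hne, hp'']
    have hxmr'' : xmr x'' g = max (groupMedian x'' g j0) q := by
      rw [xmr, NRMaux.sup'_univ_eq_max (groupMedian x'' g) hne, hq'']
    rw [NRMcost, NRMcost, hxml, hxmr, hxml'', hxmr'', hm0, hm1]
    rcases hd with ⟨h1, h2⟩ | ⟨h1, h2⟩
    · exact NRMaux.key z p q _ _ hpq h1 h2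
    · exact NRMaux.key' z p q _ _ hpq h2 h1
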